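/- Let g_1,...,g_n be affine linear functions on a convex closed domain D ⊆ ℝ^d and f a continuous selector of them (for each x ∈ D there is i with f(x) = g_i(x)). Then f is a piecewise linear function, and hence admits a representation f = max_i min_{j∈K_i} g_j. -/
import Mathlib

/-- A closed domain in `ℝ^d`: the closure of a nonempty open set. -/
def IsClosedDomain {d : ℕ} (P : Set (Fin d → ℝ)) : Prop :=
  ∃ U : Set (Fin d → ℝ), U.Nonempty ∧ IsOpen U ∧ P = closure U

/-- `f` is piecewise linear on `D`: `D` is a finite union of closed domains on
each of which `f` agrees with an affine linear function. -/
def IsPLOn {d : ℕ} (D : Set (Fin d → ℝ)) (f : (Fin d → ℝ) → ℝ) : Prop :=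
  ∃ 𝒟 : Finset (Set (Fin d → ℝ)),
    (∀ P ∈ 𝒟, IsClosedDomain P) ∧ (⋃ P ∈ 𝒟, P) = D ∧
    ∀ P ∈ 𝒟, ∃ g : (Fin d → ℝ) →ᵃ[ℝ] ℝ, ∀ x ∈ P, f x = g x

/-- `f` coincides on `D` with the max-min lattice polynomial
`x ↦ ⋁_{K ∈ 𝒦} ⋀_{j ∈ K} g j x` for some nonempty family `𝒦` of nonempty
subsets of `{1,…,n}`. -/
def MaxMinRep {d n : ℕ} (D : Set (Fin d → ℝ)) (g : Fin n → ((Fin d → ℝ) →ᵃ[ℝ] ℝ))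
    (f : (Fin d → ℝ) → ℝ) : Prop :=
  ∃ (𝒦 : Finset (Finset (Fin n))) (h𝒦 : 𝒦.Nonempty) (hK : ∀ K ∈ 𝒦, K.Nonempty),
    ∀ x ∈ D, f x = 𝒦.attach.sup' (Finset.attach_nonempty_iff.mpr h𝒦)
      (fun K => K.1.inf' (hK K.1 K.2) (fun j => g j x))

lemma affine_line' (φ : ℝ →ᵃ[ℝ] ℝ) (t : ℝ) : φ t = φ 0 + t * (φ 1 - φ 0) := by
  have h1 : φ.linear (t - 0) = φ t - φ 0 := φ.linearMap_vsub t 0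
  have h2 : φ.linear (1 - 0) = φ 1 - φ 0 := φ.linearMap_vsub 1 0
  have h3 : φ.linear t = t • φ.linear 1 := by
    rw [← φ.linear.map_smul]; norm_num
  simp only [sub_zero] at h1 h2
  rw [h3, h2, smul_eq_mul] at h1
  linarith

lemma cont_sup' {X ι : Type*} [TopologicalSpace X] (s : Finset ι) (hs : s.Nonempty)
    (φ : ι → X → ℝ) (h : ∀ i, Continuous (φ i)) :
    Continuous (fun z => s.sup' hs (fun i => φ i z)) := by
  induction hs using Finset.Nonempty.cons_induction with
  | singleton i => simp only [Finset.sup'_singleton]; exact h i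
  | cons i s hi hs ih =>
      have : (fun z => (Finset.cons i s hi).sup' (Finset.cons_nonempty hi) (fun j => φ j z))
          = fun z => max (φ i z) (s.sup' hs fun j => φ j z) := by
        funext z; exact Finset.sup'_cons hs (fun j => φ j z)
      rw [this]
      exact (h i).max ih

lemma cont_inf' {X ι : Type*} [TopologicalSpace X] (s : Finset ι) (hs : s.Nonempty)
    (φ : ι → X → ℝ) (h : ∀ i, Continuous (φ i)) :
    Continuous (fun z => s.inf' hs (fun i => φ i z)) := by
  induction hs using Finset.Nonempty.cons_induction with
  | singleton i => simp only [Finset.inf'_singleton]; exact h i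
  | cons i s hi hs ih =>
      have : (fun z => (Finset.cons i s hi).inf' (Finset.cons_nonempty hi) (fun j => φ j z))
          = fun z => min (φ i z) (s.inf' hs fun j => φ j z) := by
        funext z; exact Finset.inf'_cons hs (fun j => φ j z)
      rw [this]
      exact (h i).min ih

/-- 1D key lemma. -/
lemma seg_key {n : ℕ} (a : Fin n → (ℝ →ᵃ[ℝ] ℝ)) (h : ℝ → ℝ) (hcont : Continuous h)
    (hsel : ∀ t ∈ Set.Icc (0:ℝ) 1, ∃ j, h t = a j t) :
    ∃ j, h 0 ≤ a j 0 ∧ a j 1 ≤ h 1 := by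
  have hacont : ∀ j : Fin n, Continuous fun t => (a j : ℝ → ℝ) t :=
    fun j => (a j).continuous_of_finiteDimensional
  set T : Set ℝ := Set.Icc 0 1 ∩ ⋃ j, {t | h 0 ≤ a j 0 ∧ a j t ≤ h t} with hT
  have hTsub : T ⊆ Set.Icc 0 1 := Set.inter_subset_left
  have hT0 : (0:ℝ) ∈ T := by
    obtain ⟨j, hj⟩ := hsel 0 (by norm_num)
    exact ⟨by norm_num, Set.mem_iUnion.2 ⟨j, hj.le, hj.ge⟩⟩
  have hTclosed : IsClosed T := by
    refine isClosed_Icc.inter (isClosed_iUnion_of_finite fun j => ?_)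
    by_cases hj : h 0 ≤ a j 0
    · have : {t | h 0 ≤ a j 0 ∧ a j t ≤ h t} = {t | a j t ≤ h t} := by
        ext t; simp [hj]
      rw [this]; exact isClosed_le (hacont j) hcont
    · have : {t | h 0 ≤ a j 0 ∧ a j t ≤ h t} = ∅ := by
        ext t; simp [hj]
      rw [this]; exact isClosed_empty
  have hbdd : BddAbove T := ⟨1, fun t ht => (hTsub ht).2⟩
  set τ : ℝ := sSup T with hτ
  have hτT : τ ∈ T := hTclosed.csSup_mem ⟨0, hT0⟩ hbdd
  obtain ⟨hτIcc, hτU⟩ := hτT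
  obtain ⟨j, hj0, hjτ⟩ := Set.mem_iUnion.1 hτU
  rcases eq_or_lt_of_le hτIcc.2 with hτ1 | hτ1
  · exact ⟨j, hj0, by rwa [hτ1] at hjτ⟩
  exfalso
  have hIoc : ∀ s ∈ Set.Ioc τ 1, ∃ k, ¬ h 0 ≤ a k 0 ∧ a k s = h s := by
    intro s hs
    obtain ⟨k, hk⟩ := hsel s ⟨le_trans hτIcc.1 hs.1.le, hs.2⟩
    refine ⟨k, ?_, hk.symm⟩
    intro hk0
    have hsT : s ∈ T := ⟨⟨le_trans hτIcc.1 hs.1.le, hs.2⟩, Set.mem_iUnion.2 ⟨k, hk0, hk.ge⟩⟩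
    exact absurd (le_csSup hbdd hsT) (not_le.2 hs.1)
  set Z : Fin n → Set ℝ := fun k => {s ∈ Set.Ioc τ 1 | ¬ h 0 ≤ a k 0 ∧ a k s = h s} with hZ
  have hcover : Set.Ioc τ 1 ⊆ ⋃ k, Z k := by
    intro s hs
    obtain ⟨k, hk⟩ := hIoc s hs
    exact Set.mem_iUnion.2 ⟨k, hs, hk⟩
  have hτcl : τ ∈ closure (⋃ k, closure (Z k)) := by
    have h1 : τ ∈ closure (Set.Ioc τ 1) := by
      rw [closure_Ioc hτ1.ne]; exact ⟨le_refl τ, hτ1.le⟩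
    exact closure_mono (hcover.trans (Set.iUnion_mono fun k => subset_closure)) h1
  have hCclosed : IsClosed (⋃ k, closure (Z k)) :=
    isClosed_iUnion_of_finite fun k => isClosed_closure
  rw [hCclosed.closure_eq] at hτcl
  obtain ⟨k, hτk⟩ := Set.mem_iUnion.1 hτcl
  obtain ⟨s, hsZ⟩ : (Z k).Nonempty := by
    by_contra hne
    rw [Set.not_nonempty_iff_eq_empty] at hne
    rw [hne, closure_empty] at hτk
    exact hτk
  have hkbad : ¬ h 0 ≤ a k 0 := hsZ.2.1
  have hkτ : a k τ = h τ := by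
    have hsub : closure (Z k) ⊆ {t | a k t = h t} := by
      refine closure_minimal ?_ (isClosed_eq (hacont k) hcont)
      intro t ht; exact ht.2.2
    exact hsub hτk
  have hs1 : s ∈ Set.Ioc τ 1 := hsZ.1
  have hks : a k s = h s := hsZ.2.2
  have e1 := affine_line' (a j)
  have e2 := affine_line' (a k)
  have hδ0 : 0 < a j 0 - a k 0 := by
    have := not_le.1 hkbad; linarith
  have hδτ : a j τ - a k τ ≤ 0 := by linarith [hkτ, hjτ]
  have hτ0 : 0 ≤ τ := hτIcc.1
  have hjs : a j s ≤ a k s := by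
    have ejτ := e1 τ; have ejs := e1 s
    have ekτ := e2 τ; have eks := e2 s
    set cj := a j 1 - a j 0
    set ck := a k 1 - a k 0
    have hu : cj - ck < 0 := by nlinarith
    nlinarith [mul_le_mul_of_nonpos_right hs1.1.le (le_of_lt hu)]
  have hsT : s ∈ T := by
    refine ⟨⟨le_trans hτ0 hs1.1.le, hs1.2⟩, Set.mem_iUnion.2 ⟨j, hj0, ?_⟩⟩
    rw [← hks]; exact hjs
  exact absurd (le_csSup hbdd hsT) (not_le.2 hs1.1)

/-- Key lemma in `ℝ^d`: for any `x y ∈ D` there is `j` with `f x ≤ g j x` and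
`g j y ≤ f y`. -/
lemma key_lemma {d n : ℕ} (D : Set (Fin d → ℝ)) (hconv : Convex ℝ D)
    (g : Fin n → ((Fin d → ℝ) →ᵃ[ℝ] ℝ)) (f : (Fin d → ℝ) → ℝ)
    (hf : ContinuousOn f D) (hsel : ∀ x ∈ D, ∃ i : Fin n, f x = g i x)
    {x y : Fin d → ℝ} (hx : x ∈ D) (hy : y ∈ D) :
    ∃ j, f x ≤ g j x ∧ g j y ≤ f y := by
  set L : ℝ →ᵃ[ℝ] (Fin d → ℝ) := AffineMap.lineMap x y with hL
  set proj : ℝ → ℝ := fun t => max 0 (min t 1) with hproj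
  have hprojIcc : ∀ t, proj t ∈ Set.Icc (0:ℝ) 1 := by
    intro t
    constructor
    · exact le_max_left _ _
    · exact max_le (by norm_num) (min_le_right _ _)
  have hmem : ∀ t : ℝ, L (proj t) ∈ D := fun t => hconv.lineMap_mem hx hy (hprojIcc t)
  set h : ℝ → ℝ := fun t => f (L (proj t)) with hh
  have hprojcont : Continuous proj := continuous_const.max (continuous_id.min continuous_const)
  have hcont : Continuous h :=
    hf.comp_continuous (L.continuous_of_finiteDimensional.comp hprojcont) hmem
  have hprojeq : ∀ t ∈ Set.Icc (0:ℝ) 1, proj t = t := by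
    intro t ht
    simp only [hproj]
    rw [min_eq_left ht.2, max_eq_right ht.1]
  have hselseg : ∀ t ∈ Set.Icc (0:ℝ) 1, ∃ j, h t = ((g j).comp L) t := by
    intro t ht
    obtain ⟨i, hi⟩ := hsel (L (proj t)) (hmem t)
    exact ⟨i, by rw [hh]; simp only [AffineMap.comp_apply]; rw [hprojeq t ht] at hi ⊢; exact hi⟩
  obtain ⟨j, hj0, hj1⟩ := seg_key (fun j => (g j).comp L) h hcont hselseg
  have hp0 : proj 0 = 0 := hprojeq 0 (by norm_num)
  have hp1 : proj 1 = 1 := hprojeq 1 (by norm_num)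
  refine ⟨j, ?_, ?_⟩
  · have : h 0 = f x := by rw [hh]; simp [hp0, hL]
    have h2 : ((g j).comp L) 0 = g j x := by simp [hL]
    rw [this, h2] at hj0; exact hj0
  · have : h 1 = f y := by rw [hh]; simp [hp1, hL]
    have h2 : ((g j).comp L) 1 = g j y := by simp [hL]
    rw [this, h2] at hj1; exact hj1

/-- A continuous selector of a finite family of affine linear functions on a
convex closed domain is piecewise linear, and hence admits a max-min
representation in the `g j`. -/
theorem continuous_selector_pl {d n : ℕ} (D : Set (Fin d → ℝ)) (hconv : Convex ℝ D)
    (hdom : IsClosedDomain D) (g : Fin n → ((Fin d → ℝ) →ᵃ[ℝ] ℝ))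
    (f : (Fin d → ℝ) → ℝ) (hf : ContinuousOn f D)
    (hsel : ∀ x ∈ D, ∃ i : Fin n, f x = g i x) :
    IsPLOn D f ∧ MaxMinRep D g f := by
  classical
  obtain ⟨U, hUne, hUopen, hUD⟩ := hdom
  obtain ⟨x₀, hx₀U⟩ := hUne
  have hx₀D : x₀ ∈ D := by rw [hUD]; exact subset_closure hx₀U
  -- the index sets
  set S : (Fin d → ℝ) → Finset (Fin n) :=
    fun x => Finset.univ.filter (fun j => f x ≤ g j x) with hS
  have hSne : ∀ x ∈ D, (S x).Nonempty := by
    intro x hxD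
    obtain ⟨i, hi⟩ := hsel x hxD
    exact ⟨i, by simp [hS, hi.le]⟩
  set 𝒦 : Finset (Finset (Fin n)) :=
    Finset.univ.powerset.filter (fun K => ∃ x ∈ D, K = S x) with h𝒦
  have h𝒦mem : ∀ x ∈ D, S x ∈ 𝒦 := by
    intro x hxD
    simp only [h𝒦, Finset.mem_filter, Finset.mem_powerset]
    exact ⟨Finset.subset_univ _, x, hxD, rfl⟩
  have h𝒦ne : 𝒦.Nonempty := ⟨S x₀, h𝒦mem x₀ hx₀D⟩
  have hKne : ∀ K ∈ 𝒦, K.Nonempty := by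
    intro K hK
    simp only [h𝒦, Finset.mem_filter] at hK
    obtain ⟨-, x, hxD, rfl⟩ := hK
    exact hSne x hxD
  -- the max-min representation
  set F : (Fin d → ℝ) → ℝ := fun z => 𝒦.attach.sup' (Finset.attach_nonempty_iff.mpr h𝒦ne)
      (fun K => K.1.inf' (hKne K.1 K.2) (fun j => g j z)) with hF
  have hrep : ∀ y ∈ D, f y = F y := by
    intro y hyD
    apply le_antisymm
    · have hmem : (⟨S y, h𝒦mem y hyD⟩ : {K // K ∈ 𝒦}) ∈ 𝒦.attach := Finset.mem_attach _ _
      refine le_trans ?_ (Finset.le_sup' _ hmem)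
      refine Finset.le_inf' _ _ ?_
      intro j hj
      simp only [hS, Finset.mem_filter] at hj
      exact hj.2
    · refine Finset.sup'_le _ _ ?_
      rintro ⟨K, hK⟩ -
      have hK' := hK
      simp only [h𝒦, Finset.mem_filter] at hK'
      obtain ⟨-, x, hxD, rfl⟩ := hK'
      obtain ⟨j, hjx, hjy⟩ := key_lemma D hconv g f hf hsel hxD hyD
      have hjS : j ∈ S x := by simp [hS, hjx]
      exact le_trans (Finset.inf'_le _ hjS) hjy
  have hmmr : MaxMinRep D g f := ⟨𝒦, h𝒦ne, hKne, hrep⟩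
  refine ⟨?_, hmmr⟩
  -- piecewise linearity
  have hFcont : Continuous F :=
    cont_sup' _ _ _ (fun K => cont_inf' _ _ _ (fun j => (g j).continuous_of_finiteDimensional))
  set A : Fin n → Set (Fin d → ℝ) := fun i => {z | F z = g i z} with hA
  have hAclosed : ∀ i, IsClosed (A i) :=
    fun i => isClosed_eq hFcont (g i).continuous_of_finiteDimensional
  have hAcover : (⋃ i, A i) = Set.univ := by
    ext z
    simp only [Set.mem_iUnion, Set.mem_univ, iff_true]
    obtain ⟨K, -, hKeq⟩ := Finset.exists_mem_eq_sup' (Finset.attach_nonempty_iff.mpr h𝒦ne)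
      (fun K : {K // K ∈ 𝒦} => K.1.inf' (hKne K.1 K.2) (fun j => g j z))
    obtain ⟨j, -, hjeq⟩ := Finset.exists_mem_eq_inf' (hKne K.1 K.2) (fun j => g j z)
    exact ⟨j, hKeq.trans hjeq⟩
  have hdense : Dense (⋃ i, interior (A i)) :=
    dense_iUnion_interior_of_closed hAclosed hAcover
  set P : Fin n → Set (Fin d → ℝ) := fun i => closure (U ∩ interior (A i)) with hP
  set 𝒟 : Finset (Set (Fin d → ℝ)) :=
    (Finset.univ.filter (fun i : Fin n => (U ∩ interior (A i)).Nonempty)).image P with h𝒟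
  have h𝒟mem : ∀ Q ∈ 𝒟, ∃ i : Fin n, (U ∩ interior (A i)).Nonempty ∧ Q = P i := by
    intro Q hQ
    simp only [h𝒟, Finset.mem_image, Finset.mem_filter, Finset.mem_univ, true_and] at hQ
    obtain ⟨i, hi, hQi⟩ := hQ
    exact ⟨i, hi, hQi.symm⟩
  have hPD : ∀ i, P i ⊆ D := by
    intro i
    rw [hUD]
    exact closure_mono Set.inter_subset_left
  have hPA : ∀ i, P i ⊆ A i := by
    intro i
    refine closure_minimal ?_ (hAclosed i)
    exact Set.inter_subset_right.trans interior_subset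
  refine ⟨𝒟, ?_, ?_, ?_⟩
  · intro Q hQ
    obtain ⟨i, hi, rfl⟩ := h𝒟mem Q hQ
    exact ⟨U ∩ interior (A i), hi, hUopen.inter isOpen_interior, rfl⟩
  · apply Set.Subset.antisymm
    · intro z hz
      simp only [Set.mem_iUnion] at hz
      obtain ⟨Q, hQ, hzQ⟩ := hz
      obtain ⟨i, -, rfl⟩ := h𝒟mem Q hQ
      exact hPD i hzQ
    · have hclosed : IsClosed (⋃ Q ∈ 𝒟, Q) := by
        refine Set.Finite.isClosed_biUnion (𝒟.finite_toSet) ?_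
        intro Q hQ
        obtain ⟨i, -, rfl⟩ := h𝒟mem Q hQ
        exact isClosed_closure
      rw [hUD]
      refine closure_minimal ?_ hclosed
      intro u huU
      have h1 : u ∈ closure (U ∩ ⋃ i, interior (A i)) :=
        hdense.open_subset_closure_inter hUopen huU
      have h2 : U ∩ ⋃ i, interior (A i) = ⋃ i, (U ∩ interior (A i)) := by
        rw [Set.inter_iUnion]
      have h3 : closure (⋃ i, (U ∩ interior (A i))) ⊆ ⋃ i, P i := by
        refine closure_minimal (Set.iUnion_mono fun i => subset_closure)
          (isClosed_iUnion_of_finite fun i => isClosed_closure)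
      rw [h2] at h1
      have h4 : u ∈ ⋃ i, P i := h3 h1
      obtain ⟨i, hui⟩ := Set.mem_iUnion.1 h4
      have hine : (U ∩ interior (A i)).Nonempty := by
        by_contra hne
        rw [Set.not_nonempty_iff_eq_empty] at hne
        rw [hP] at hui
        simp only [hne, closure_empty] at hui
        exact hui
      have hPi𝒟 : P i ∈ 𝒟 := by
        simp only [h𝒟, Finset.mem_image, Finset.mem_filter, Finset.mem_univ, true_and]
        exact ⟨i, hine, rfl⟩
      exact Set.mem_biUnion hPi𝒟 hui
  · intro Q hQ
    obtain ⟨i, -, rfl⟩ := h𝒟mem Q hQ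
    refine ⟨g i, ?_⟩
    intro z hz
    have hzD : z ∈ D := hPD i hz
    have hzA : z ∈ A i := hPA i hz
    rw [hrep z hzD]
    exact hzA
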